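/- The natural rate of interest is strictly increasing in the level of government debt (Proposition 3, derivative form): let 0 ≤ b̄ < bmax and let g : ℝ → ℝ be differentiable at b̄; suppose there is an open interval U containing b̄ such that for all b ∈ U one has g(b) > −1, Dh(b, g(b)) > 0, Dl(b, g(b)) > 0 and F(b, g(b)) = 0. Then the derivative of g at b̄ is strictly positive. -/
import Mathlib


/-- High-productivity stationary consumption denominator:
Dh(b,r) = w·zh + (1−β)·(1+r)·b·(1−zh) with w = (ε−1)/ε. -/
noncomputable def Dh (β ε zh : ℝ) (b r : ℝ) : ℝ :=
  ((ε - 1) / ε) * zh + (1 - β) * (1 + r) * b * (1 - zh)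

/-- Low-productivity stationary consumption denominator:
Dl(b,r) = w·zl + (1−β)·(1+r)·b·(1−zl) with w = (ε−1)/ε. -/
noncomputable def Dl (β ε zl : ℝ) (b r : ℝ) : ℝ :=
  ((ε - 1) / ε) * zl + (1 - β) * (1 + r) * b * (1 - zl)

/-- Natural-rate equation residual:
F(b,r) = β·ρ·(1+r)/Dh(b,r) + β·(1−ρ)·(1+r)/Dl(b,r) − ε/(ε−1). -/
noncomputable def F (β ε ρ zh zl : ℝ) (b r : ℝ) : ℝ :=
  β * ρ * (1 + r) / Dh β ε zh b r
    + β * (1 - ρ) * (1 + r) / Dl β ε zl b r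
    - ε / (ε - 1)

private lemma aux1 {β ρ R A B : ℝ} (hβ0 : 0 < β) (hρ0 : 0 < ρ) (hρ1 : ρ < 1)
    (hR : 0 < 1 + R) (hA : 0 < A) (hB : 0 < B)
    (hkey : (ρ * A + (1 - ρ) * B) * (β * ρ * (1 + R) * B + β * (1 - ρ) * (1 + R) * A) = A * B) :
    β * (1 + R) ≤ 1 := by
  nlinarith [mul_pos hA hB, sq_nonneg (A - B),
    mul_nonneg (mul_nonneg hρ0.le (by linarith : (0:ℝ) ≤ 1 - ρ)) (sq_nonneg (A - B)),
    mul_pos hβ0 hR]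

private lemma aux2 {β R b W : ℝ} (hβ0 : 0 < β) (h1β : 0 < 1 - β) (hb0 : 0 ≤ b)
    (hβr : β * (1 + R) ≤ 1) (hb1 : b * (1 - β) < W * β) :
    (1 - β) * (1 + R) * b < W := by
  nlinarith [mul_nonneg (mul_nonneg h1β.le hb0) (by linarith : (0:ℝ) ≤ 1 - β * (1 + R)), hb1, hβ0]

private lemma aux3 {zh zl W c : ℝ} (h1 : 0 < zh - zl) (h2 : 0 < W - c) :
    W * zl + c * (1 - zl) < W * zh + c * (1 - zh) := by
  nlinarith [mul_pos h1 h2]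

private lemma aux4 {d P Q : ℝ} (h : d * P = Q) (hP : 0 < P) (hQ : 0 < Q) : 0 < d := by
  rcases mul_pos_iff.1 (h ▸ hQ) with ⟨h1, _⟩ | ⟨_, h2⟩
  · exact h1
  · linarith

set_option maxHeartbeats 1000000 in
/-- Proposition 3 (derivative form): if g locally solves the natural-rate
equation F(b, g(b)) = 0 on an open interval around b̄ ∈ [0, bmax), with g(b)
> −1 and positive denominators, and g is differentiable at b̄, then
g'(b̄) > 0. -/
theorem stmt_15 (β ε ρ zh zl : ℝ)
    (hβ0 : 0 < β) (hβ1 : β < 1) (hε : 1 < ε)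
    (hρ0 : 0 < ρ) (hρ1 : ρ < 1)
    (hzl0 : 0 < zl) (hzl1 : zl < 1) (hzh : 1 < zh)
    (hmean : ρ * zh + (1 - ρ) * zl = 1)
    (bbar : ℝ) (hb0 : 0 ≤ bbar)
    (hb1 : bbar < ((ε - 1) / ε) * (β / (1 - β)))
    (g : ℝ → ℝ) (hg : DifferentiableAt ℝ g bbar)
    (lo hi : ℝ) (hlo : lo < bbar) (hhi : bbar < hi)
    (hsol : ∀ b ∈ Set.Ioo lo hi,
      g b > -1 ∧ Dh β ε zh b (g b) > 0 ∧ Dl β ε zl b (g b) > 0 ∧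
      F β ε ρ zh zl b (g b) = 0) :
    0 < deriv g bbar := by
  obtain ⟨hr, hA, hB, hF⟩ := hsol bbar ⟨hlo, hhi⟩
  simp only [Dh] at hA
  simp only [Dl] at hB
  simp only [F, Dh, Dl] at hF
  have hε0 : (0:ℝ) < ε := by linarith
  have hε1 : (0:ℝ) < ε - 1 := by linarith
  have hw : (0:ℝ) < (ε - 1) / ε := div_pos hε1 hε0
  have hr1 : (0:ℝ) < 1 + g bbar := by linarith
  have h1β : (0:ℝ) < 1 - β := by linarith
  -- Step 1 : β (1+R) ≤ 1
  have hsum : ρ * ((ε - 1) / ε * zh + (1 - β) * (1 + g bbar) * bbar * (1 - zh)) + (1 - ρ) * ((ε - 1) / ε * zl + (1 - β) * (1 + g bbar) * bbar * (1 - zl)) = (ε - 1) / ε := by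
    linear_combination ((ε - 1) / ε - (1 - β) * (1 + g bbar) * bbar) * hmean
  rw [sub_eq_zero, div_add_div _ _ hA.ne' hB.ne',
    div_eq_div_iff (mul_pos hA hB).ne' hε1.ne'] at hF
  have hWe : (ε - 1) / ε * ε = ε - 1 := div_mul_cancel₀ _ hε0.ne'
  have hFp2' : ε * (((ε - 1) / ε) * (β * ρ * (1 + g bbar) * ((ε - 1) / ε * zl + (1 - β) * (1 + g bbar) * bbar * (1 - zl)) + β * (1 - ρ) * (1 + g bbar) * ((ε - 1) / ε * zh + (1 - β) * (1 + g bbar) * bbar * (1 - zh))))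
      = ε * (((ε - 1) / ε * zh + (1 - β) * (1 + g bbar) * bbar * (1 - zh)) * ((ε - 1) / ε * zl + (1 - β) * (1 + g bbar) * bbar * (1 - zl))) := by
    linear_combination (β * ρ * (1 + g bbar) * ((ε - 1) / ε * zl + (1 - β) * (1 + g bbar) * bbar * (1 - zl)) + β * (1 - ρ) * (1 + g bbar) * ((ε - 1) / ε * zh + (1 - β) * (1 + g bbar) * bbar * (1 - zh))) * hWe + hF
  have hFp2 := mul_left_cancel₀ hε0.ne' hFp2'
  have hkey1 : (ρ * ((ε - 1) / ε * zh + (1 - β) * (1 + g bbar) * bbar * (1 - zh)) + (1 - ρ) * ((ε - 1) / ε * zl + (1 - β) * (1 + g bbar) * bbar * (1 - zl))) * (β * ρ * (1 + g bbar) * ((ε - 1) / ε * zl + (1 - β) * (1 + g bbar) * bbar * (1 - zl)) + β * (1 - ρ) * (1 + g bbar) * ((ε - 1) / ε * zh + (1 - β) * (1 + g bbar) * bbar * (1 - zh)))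
      = ((ε - 1) / ε * zh + (1 - β) * (1 + g bbar) * bbar * (1 - zh)) * ((ε - 1) / ε * zl + (1 - β) * (1 + g bbar) * bbar * (1 - zl)) := by
    rw [hsum]; exact hFp2
  have hβr : β * (1 + g bbar) ≤ 1 := aux1 hβ0 hρ0 hρ1 hr1 hA hB hkey1
  -- Step 2 : A > B
  have hb1' : bbar * (1 - β) < (ε - 1) / ε * β := by
    rw [show ((ε - 1) / ε) * (β / (1 - β)) = ((ε - 1) / ε * β) / (1 - β) by ring,
      lt_div_iff₀ h1β] at hb1
    exact hb1
  have hc : (1 - β) * (1 + g bbar) * bbar < (ε - 1) / ε := aux2 hβ0 h1β hb0 hβr hb1'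
  have hAB : ((ε - 1) / ε * zl + (1 - β) * (1 + g bbar) * bbar * (1 - zl)) < ((ε - 1) / ε * zh + (1 - β) * (1 + g bbar) * bbar * (1 - zh)) :=
    aux3 (by linarith : (0:ℝ) < zh - zl) (by linarith : (0:ℝ) < (ε - 1) / ε - (1 - β) * (1 + g bbar) * bbar)
  -- Step 3 : derivative of b ↦ F(b, g b) at bbar
  have hgd : HasDerivAt g (deriv g bbar) bbar := hg.hasDerivAt
  have h1 : HasDerivAt (fun b => 1 + g b) (deriv g bbar) bbar := hgd.const_add 1
  have hN1 : HasDerivAt (fun b => β * ρ * (1 + g b)) (β * ρ * (deriv g bbar)) bbar :=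
    h1.const_mul (β * ρ)
  have hN2 : HasDerivAt (fun b => β * (1 - ρ) * (1 + g b)) (β * (1 - ρ) * (deriv g bbar)) bbar :=
    h1.const_mul (β * (1 - ρ))
  have hD1 : HasDerivAt (fun b => (1 - β) * (1 + g b)) ((1 - β) * (deriv g bbar)) bbar :=
    h1.const_mul (1 - β)
  have hD2 : HasDerivAt (fun b => (1 - β) * (1 + g b) * b)
      ((1 - β) * (deriv g bbar) * bbar + (1 - β) * (1 + g bbar) * 1) bbar :=
    hD1.mul (hasDerivAt_id bbar)
  have hDA : HasDerivAt (fun b => (ε - 1) / ε * zh + (1 - β) * (1 + g b) * b * (1 - zh))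
      (((1 - β) * deriv g bbar * bbar + (1 - β) * (1 + g bbar) * 1) * (1 - zh)) bbar :=
    (hD2.mul_const (1 - zh)).const_add ((ε - 1) / ε * zh)
  have hDB : HasDerivAt (fun b => (ε - 1) / ε * zl + (1 - β) * (1 + g b) * b * (1 - zl))
      (((1 - β) * deriv g bbar * bbar + (1 - β) * (1 + g bbar) * 1) * (1 - zl)) bbar :=
    (hD2.mul_const (1 - zl)).const_add ((ε - 1) / ε * zl)
  have hT1 := hN1.div hDA (ne_of_gt hA)
  have hT2 := hN2.div hDB (ne_of_gt hB)
  have hDer : HasDerivAt (fun b => F β ε ρ zh zl b (g b))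
      ((β * ρ * (deriv g bbar) * ((ε - 1) / ε * zh + (1 - β) * (1 + g bbar) * bbar * (1 - zh)) - β * ρ * (1 + g bbar) * (((1 - β) * deriv g bbar * bbar + (1 - β) * (1 + g bbar) * 1) * (1 - zh))) / ((ε - 1) / ε * zh + (1 - β) * (1 + g bbar) * bbar * (1 - zh)) ^ 2
      + (β * (1 - ρ) * (deriv g bbar) * ((ε - 1) / ε * zl + (1 - β) * (1 + g bbar) * bbar * (1 - zl)) - β * (1 - ρ) * (1 + g bbar) * (((1 - β) * deriv g bbar * bbar + (1 - β) * (1 + g bbar) * 1) * (1 - zl))) / ((ε - 1) / ε * zl + (1 - β) * (1 + g bbar) * bbar * (1 - zl)) ^ 2) bbar :=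
    (hT1.add hT2).sub_const (ε / (ε - 1))
  have heq : (fun b => F β ε ρ zh zl b (g b)) =ᶠ[nhds bbar] fun _ => (0:ℝ) := by
    filter_upwards [Ioo_mem_nhds hlo hhi] with b hb
    exact (hsol b hb).2.2.2
  have hE0 : (β * ρ * (deriv g bbar) * ((ε - 1) / ε * zh + (1 - β) * (1 + g bbar) * bbar * (1 - zh)) - β * ρ * (1 + g bbar) * (((1 - β) * deriv g bbar * bbar + (1 - β) * (1 + g bbar) * 1) * (1 - zh))) / ((ε - 1) / ε * zh + (1 - β) * (1 + g bbar) * bbar * (1 - zh)) ^ 2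
      + (β * (1 - ρ) * (deriv g bbar) * ((ε - 1) / ε * zl + (1 - β) * (1 + g bbar) * bbar * (1 - zl)) - β * (1 - ρ) * (1 + g bbar) * (((1 - β) * deriv g bbar * bbar + (1 - β) * (1 + g bbar) * 1) * (1 - zl))) / ((ε - 1) / ε * zl + (1 - β) * (1 + g bbar) * bbar * (1 - zl)) ^ 2 = 0 := by
    rw [← hDer.deriv, heq.deriv_eq, deriv_const]
  -- Step 4 : clear denominators and conclude
  rw [div_add_div _ _ (pow_ne_zero 2 hA.ne') (pow_ne_zero 2 hB.ne'), div_eq_zero_iff] at hE0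
  have h2 : (β * ρ * (deriv g bbar) * ((ε - 1) / ε * zh + (1 - β) * (1 + g bbar) * bbar * (1 - zh)) - β * ρ * (1 + g bbar) * (((1 - β) * deriv g bbar * bbar + (1 - β) * (1 + g bbar) * 1) * (1 - zh))) * ((ε - 1) / ε * zl + (1 - β) * (1 + g bbar) * bbar * (1 - zl)) ^ 2
      + ((ε - 1) / ε * zh + (1 - β) * (1 + g bbar) * bbar * (1 - zh)) ^ 2 * (β * (1 - ρ) * (deriv g bbar) * ((ε - 1) / ε * zl + (1 - β) * (1 + g bbar) * bbar * (1 - zl)) - β * (1 - ρ) * (1 + g bbar) * (((1 - β) * deriv g bbar * bbar + (1 - β) * (1 + g bbar) * 1) * (1 - zl))) = 0 := by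
    rcases hE0 with h | h
    · exact h
    · exact absurd h (by positivity)
  have key : (deriv g bbar) * (β * ρ * ((ε - 1) / ε) * zh * ((ε - 1) / ε * zl + (1 - β) * (1 + g bbar) * bbar * (1 - zl)) ^ 2 + β * (1 - ρ) * ((ε - 1) / ε) * zl * ((ε - 1) / ε * zh + (1 - β) * (1 + g bbar) * bbar * (1 - zh)) ^ 2)
      = (1 + g bbar) ^ 2 * (1 - β) * β * ((1 - ρ) * (1 - zl)) * (((ε - 1) / ε * zh + (1 - β) * (1 + g bbar) * bbar * (1 - zh)) ^ 2 - ((ε - 1) / ε * zl + (1 - β) * (1 + g bbar) * bbar * (1 - zl)) ^ 2) := by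
    linear_combination h2 - (1 + g bbar) ^ 2 * (1 - β) * β * ((ε - 1) / ε * zl + (1 - β) * (1 + g bbar) * bbar * (1 - zl)) ^ 2 * hmean
  have hP : 0 < β * ρ * ((ε - 1) / ε) * zh * ((ε - 1) / ε * zl + (1 - β) * (1 + g bbar) * bbar * (1 - zl)) ^ 2 + β * (1 - ρ) * ((ε - 1) / ε) * zl * ((ε - 1) / ε * zh + (1 - β) * (1 + g bbar) * bbar * (1 - zh)) ^ 2 :=
    add_pos
      (mul_pos (mul_pos (mul_pos (mul_pos hβ0 hρ0) hw) (by linarith : (0:ℝ) < zh)) (pow_pos hB 2))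
      (mul_pos (mul_pos (mul_pos (mul_pos hβ0 (by linarith : (0:ℝ) < 1 - ρ)) hw) hzl0) (pow_pos hA 2))
  have hA2 : ((ε - 1) / ε * zl + (1 - β) * (1 + g bbar) * bbar * (1 - zl)) ^ 2 < ((ε - 1) / ε * zh + (1 - β) * (1 + g bbar) * bbar * (1 - zh)) ^ 2 := pow_lt_pow_left₀ hAB hB.le (by norm_num)
  have hRHS : 0 < (1 + g bbar) ^ 2 * (1 - β) * β * ((1 - ρ) * (1 - zl)) * (((ε - 1) / ε * zh + (1 - β) * (1 + g bbar) * bbar * (1 - zh)) ^ 2 - ((ε - 1) / ε * zl + (1 - β) * (1 + g bbar) * bbar * (1 - zl)) ^ 2) :=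
    mul_pos
      (mul_pos (mul_pos (mul_pos (pow_pos hr1 2) h1β) hβ0)
        (mul_pos (by linarith : (0:ℝ) < 1 - ρ) (by linarith : (0:ℝ) < 1 - zl)))
      (sub_pos.mpr hA2)
  exact aux4 key hP hRHS
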